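/- Let Γ₁, …, Γₙ be nonzero real numbers. For each k ∈ ℕ let s^k = (s^k₁, …, s^kₙ) be a configuration of pairwise distinct unit vectors in ℝ³ that is a fixed point of the n-vortex problem on the round unit sphere, i.e. Σ_{j≠i} Γⱼ (s^kⱼ × s^kᵢ)/‖s^kᵢ − s^kⱼ‖² = 0 for every i. Suppose that for every i the sequence s^kᵢ converges to some s*ᵢ ∈ ℝ³ as k → ∞, and that there is a subset Λ ⊆ {1, …, n} with |Λ| ≥ 2 and a point s* such that s*ᵢ = s* for all i ∈ Λ while s*_l ≠ s* for all l ∉ Λ. Then Σ_{i,j ∈ Λ, i≠j} ΓᵢΓⱼ = 0. -/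

import Mathlib

/-- The cross product on `ℝ³` viewed as the Euclidean space `EuclideanSpace ℝ (Fin 3)`. -/
noncomputable def cross (u v : EuclideanSpace ℝ (Fin 3)) : EuclideanSpace ℝ (Fin 3) :=
  (WithLp.equiv 2 (Fin 3 → ℝ)).symm
    (crossProduct ((WithLp.equiv 2 (Fin 3 → ℝ)) u) ((WithLp.equiv 2 (Fin 3 → ℝ)) v))

lemma inner_eq_dot (x y : EuclideanSpace ℝ (Fin 3)) :
    (inner ℝ x y : ℝ) = dotProduct ((WithLp.equiv 2 (Fin 3 → ℝ)) x)
      ((WithLp.equiv 2 (Fin 3 → ℝ)) y) := by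
  simp [PiLp.inner_apply, dotProduct, RCLike.inner_apply, mul_comm]

lemma key (u v w : EuclideanSpace ℝ (Fin 3)) :
    (inner ℝ (cross u v) (cross w v) : ℝ)
      = inner ℝ u w * inner ℝ v v - inner ℝ u v * inner ℝ v w := by
  simp only [inner_eq_dot, cross, Equiv.apply_symm_apply]
  exact cross_dot_cross _ _ _ _

lemma pointwise (u v w : EuclideanSpace ℝ (Fin 3)) (hu : ‖u‖ = 1) (hv : ‖v‖ = 1)
    (hne : v ≠ u) :
    (inner ℝ (cross u v) (cross w v) : ℝ) / ‖v - u‖ ^ 2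
      = (inner ℝ (u - v) w : ℝ) / ‖v - u‖ ^ 2 + (inner ℝ v w : ℝ) / 2 := by
  have hd : ‖v - u‖ ≠ 0 := by simp [sub_eq_zero, hne]
  have hd2 : ‖v - u‖ ^ 2 ≠ 0 := pow_ne_zero 2 hd
  have h2 : (inner ℝ u v : ℝ) = 1 - ‖v - u‖ ^ 2 / 2 := by
    have : ‖v - u‖ ^ 2 = 2 - 2 * (inner ℝ u v : ℝ) := by
      rw [norm_sub_sq_real, hu, hv, real_inner_comm]; ring
    rw [this]; ring
  rw [key, inner_sub_left, real_inner_self_eq_norm_sq, hv, h2]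
  generalize (inner ℝ u w : ℝ) = A
  generalize (inner ℝ v w : ℝ) = C
  generalize hD : ‖v - u‖ ^ 2 = D at hd2 ⊢
  field_simp
  ring

noncomputable def Fterm {n : ℕ} (Γ : Fin n → ℝ) (sstar : EuclideanSpace ℝ (Fin 3))
    (z : Fin n → EuclideanSpace ℝ (Fin 3)) (i j : Fin n) : ℝ :=
  (Γ i * Γ j) * ((inner ℝ (z j - z i) sstar : ℝ) / ‖z i - z j‖ ^ 2)

noncomputable def Gterm {n : ℕ} (Γ : Fin n → ℝ) (sstar : EuclideanSpace ℝ (Fin 3))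
    (z : Fin n → EuclideanSpace ℝ (Fin 3)) (i j : Fin n) : ℝ :=
  (Γ i * Γ j) * ((inner ℝ (z i) sstar : ℝ) / 2)

/-- If a sequence of fixed-point configurations of the n-vortex problem
on the round unit sphere converges, and a cluster `Λ` (with `|Λ| ≥ 2`) of vortices
accumulates to a single point `s*` to which no vortex outside `Λ` converges, then
`∑_{i,j ∈ Λ, i ≠ j} Γ i Γ j = 0`. -/
theorem stmt12 (n : ℕ) (Γ : Fin n → ℝ) (hΓ : ∀ i, Γ i ≠ 0)
    (s : ℕ → Fin n → EuclideanSpace ℝ (Fin 3))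
    (hnorm : ∀ k i, ‖s k i‖ = 1)
    (hdist : ∀ k, ∀ i j, i ≠ j → s k i ≠ s k j)
    (hfix : ∀ k i, ∑ j ∈ Finset.univ.erase i,
        (Γ j / ‖s k i - s k j‖ ^ 2) • cross (s k j) (s k i) = 0)
    (slim : Fin n → EuclideanSpace ℝ (Fin 3))
    (hlim : ∀ i, Filter.Tendsto (fun k => s k i) Filter.atTop (nhds (slim i)))
    (Λ : Finset (Fin n)) (hΛ : 2 ≤ Λ.card) (sstar : EuclideanSpace ℝ (Fin 3))
    (hin : ∀ i ∈ Λ, slim i = sstar) (hout : ∀ l ∉ Λ, slim l ≠ sstar) :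
    ∑ i ∈ Λ, ∑ j ∈ Λ.erase i, Γ i * Γ j = 0 := by
  classical
  -- limits have unit norm
  have hsl : ∀ i, ‖slim i‖ = 1 := by
    intro i
    have h1 : Filter.Tendsto (fun k => ‖s k i‖) Filter.atTop (nhds ‖slim i‖) := (hlim i).norm
    have h2 : (fun k => ‖s k i‖) = fun _ => (1 : ℝ) := funext fun k => hnorm k i
    rw [h2] at h1
    exact tendsto_nhds_unique h1 tendsto_const_nhds
  have hΛne : Λ.Nonempty := Finset.card_pos.1 (lt_of_lt_of_le two_pos hΛ)
  have hstar : ‖sstar‖ = 1 := by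
    obtain ⟨i0, hi0⟩ := hΛne; rw [← hin i0 hi0]; exact hsl i0
  have hss : (inner ℝ sstar sstar : ℝ) = 1 := by
    rw [real_inner_self_eq_norm_sq, hstar]; norm_num
  -- splitting of univ.erase i for i ∈ Λ
  have hdisj : ∀ i : Fin n, Disjoint (Λ.erase i) Λᶜ :=
    fun i => disjoint_compl_right.mono_left (Finset.erase_subset i Λ)
  have hsplit : ∀ i ∈ Λ, Finset.univ.erase i = (Λ.erase i) ∪ Λᶜ := by
    intro i hi
    ext j
    simp only [Finset.mem_erase, Finset.mem_union, Finset.mem_compl, Finset.mem_univ,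
      and_true]
    constructor
    · intro hj
      by_cases hjΛ : j ∈ Λ
      · exact Or.inl ⟨hj, hjΛ⟩
      · exact Or.inr hjΛ
    · rintro (⟨hj, _⟩ | hj)
      · exact hj
      · exact fun h => hj (h ▸ hi)
  -- Step 1: per-configuration identity from the fixed point equation
  have hfix' : ∀ k, ∀ i ∈ Λ,
      ∑ j ∈ Finset.univ.erase i, (Fterm Γ sstar (s k) i j + Gterm Γ sstar (s k) i j) = 0 := by
    intro k i _
    have h0 := congrArg
      (fun v : EuclideanSpace ℝ (Fin 3) => (inner ℝ v (cross sstar (s k i)) : ℝ)) (hfix k i)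
    simp only [sum_inner, real_inner_smul_left, inner_zero_left] at h0
    have hmain : ∑ j ∈ Finset.univ.erase i, (Fterm Γ sstar (s k) i j + Gterm Γ sstar (s k) i j)
        = Γ i * ∑ j ∈ Finset.univ.erase i,
            (Γ j / ‖s k i - s k j‖ ^ 2) *
              (inner ℝ (cross (s k j) (s k i)) (cross sstar (s k i)) : ℝ) := by
      rw [Finset.mul_sum]
      refine Finset.sum_congr rfl fun j hj => ?_
      have hij : j ≠ i := (Finset.mem_erase.1 hj).1
      have hne : s k i ≠ s k j := hdist k i j hij.symm
      have hp := pointwise (s k j) (s k i) sstar (hnorm k j) (hnorm k i) hne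
      have hX : (Γ j / ‖s k i - s k j‖ ^ 2) *
            (inner ℝ (cross (s k j) (s k i)) (cross sstar (s k i)) : ℝ)
          = Γ j * ((inner ℝ (s k j - s k i) sstar : ℝ) / ‖s k i - s k j‖ ^ 2
              + (inner ℝ (s k i) sstar : ℝ) / 2) := by
        rw [div_mul_eq_mul_div, mul_div_assoc, hp]
      rw [hX, Fterm, Gterm]; ring
    rw [hmain, h0, mul_zero]
  -- antisymmetric part cancels inside Λ
  have hA : ∀ k, ∑ i ∈ Λ, ∑ j ∈ Λ.erase i, Fterm Γ sstar (s k) i j = 0 := by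
    intro k
    have hneg : ∀ i j : Fin n, Fterm Γ sstar (s k) j i = - Fterm Γ sstar (s k) i j := by
      intro i j
      unfold Fterm
      rw [norm_sub_rev (s k j) (s k i),
        show s k i - s k j = -(s k j - s k i) from (neg_sub _ _).symm, inner_neg_left]
      ring
    have hsw : ∑ i ∈ Λ, ∑ j ∈ Λ.erase i, Fterm Γ sstar (s k) i j
        = ∑ j ∈ Λ, ∑ i ∈ Λ.erase j, Fterm Γ sstar (s k) i j := by
      refine Finset.sum_comm' ?_
      intro x y
      simp only [Finset.mem_erase]
      tauto
    have h2 : ∑ j ∈ Λ, ∑ i ∈ Λ.erase j, Fterm Γ sstar (s k) i j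
        = - ∑ i ∈ Λ, ∑ j ∈ Λ.erase i, Fterm Γ sstar (s k) i j := by
      rw [← Finset.sum_neg_distrib]
      refine Finset.sum_congr rfl fun a _ => ?_
      rw [← Finset.sum_neg_distrib]
      exact Finset.sum_congr rfl fun b _ => hneg a b
    have := hsw.trans h2
    linarith
  -- Step 2: the per-k equation with outer terms only
  have hsum : ∀ k, (∑ i ∈ Λ, ∑ l ∈ Λᶜ, Fterm Γ sstar (s k) i l)
      + (∑ i ∈ Λ, ∑ j ∈ Finset.univ.erase i, Gterm Γ sstar (s k) i j) = 0 := by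
    intro k
    have h0 : ∑ i ∈ Λ, ∑ j ∈ Finset.univ.erase i,
        (Fterm Γ sstar (s k) i j + Gterm Γ sstar (s k) i j) = 0 :=
      Finset.sum_eq_zero fun i hi => hfix' k i hi
    have h1 : ∑ i ∈ Λ, ∑ j ∈ Finset.univ.erase i,
          (Fterm Γ sstar (s k) i j + Gterm Γ sstar (s k) i j)
        = (∑ i ∈ Λ, ∑ j ∈ Finset.univ.erase i, Fterm Γ sstar (s k) i j)
          + (∑ i ∈ Λ, ∑ j ∈ Finset.univ.erase i, Gterm Γ sstar (s k) i j) := by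
      rw [← Finset.sum_add_distrib]
      exact Finset.sum_congr rfl fun i _ => Finset.sum_add_distrib
    have h2 : ∑ i ∈ Λ, ∑ j ∈ Finset.univ.erase i, Fterm Γ sstar (s k) i j
        = (∑ i ∈ Λ, ∑ j ∈ Λ.erase i, Fterm Γ sstar (s k) i j)
          + (∑ i ∈ Λ, ∑ l ∈ Λᶜ, Fterm Γ sstar (s k) i l) := by
      rw [← Finset.sum_add_distrib]
      refine Finset.sum_congr rfl fun i hi => ?_
      rw [hsplit i hi, Finset.sum_union (hdisj i)]
    rw [h1, h2, hA k] at h0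
    linarith
  -- Step 3: limits
  have htendF : ∀ i ∈ Λ, ∀ l ∈ Λᶜ, Filter.Tendsto (fun k => Fterm Γ sstar (s k) i l)
      Filter.atTop (nhds ((Γ i * Γ l) * (-(1/2) : ℝ))) := by
    intro i hi l hl
    have hlΛ : l ∉ Λ := Finset.mem_compl.1 hl
    have hsi : Filter.Tendsto (fun k => s k i) Filter.atTop (nhds sstar) := by
      rw [← hin i hi]; exact hlim i
    have hdne : sstar - slim l ≠ 0 := sub_ne_zero.2 (Ne.symm (hout l hlΛ))
    have hd0 : ‖sstar - slim l‖ ^ 2 ≠ 0 := pow_ne_zero 2 (norm_ne_zero_iff.2 hdne)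
    have hnum : Filter.Tendsto (fun k => (inner ℝ (s k l - s k i) sstar : ℝ)) Filter.atTop
        (nhds (inner ℝ (slim l - sstar) sstar : ℝ)) :=
      ((hlim l).sub hsi).inner tendsto_const_nhds
    have hden : Filter.Tendsto (fun k => ‖s k i - s k l‖ ^ 2) Filter.atTop
        (nhds (‖sstar - slim l‖ ^ 2)) := ((hsi.sub (hlim l)).norm).pow 2
    have hval : (inner ℝ (slim l - sstar) sstar : ℝ) / ‖sstar - slim l‖ ^ 2 = -(1/2) := by
      have hD : ‖sstar - slim l‖ ^ 2 = 2 - 2 * (inner ℝ sstar (slim l) : ℝ) := by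
        rw [norm_sub_sq_real, hstar, hsl l]; ring
      have hnum' : (inner ℝ (slim l - sstar) sstar : ℝ) = (inner ℝ sstar (slim l) : ℝ) - 1 := by
        rw [inner_sub_left, real_inner_comm (slim l) sstar, hss]
      have ht : 2 - 2 * (inner ℝ sstar (slim l) : ℝ) ≠ 0 := hD ▸ hd0
      rw [hnum', hD, div_eq_iff ht]; ring
    have := ((hnum.div hden hd0).const_mul (Γ i * Γ l))
    rw [hval] at this
    exact this
  have htendG : ∀ i ∈ Λ, ∀ j : Fin n, Filter.Tendsto (fun k => Gterm Γ sstar (s k) i j)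
      Filter.atTop (nhds ((Γ i * Γ j) * ((1:ℝ)/2))) := by
    intro i hi j
    have hsi : Filter.Tendsto (fun k => s k i) Filter.atTop (nhds sstar) := by
      rw [← hin i hi]; exact hlim i
    have h1 : Filter.Tendsto (fun k => (inner ℝ (s k i) sstar : ℝ)) Filter.atTop
        (nhds (inner ℝ sstar sstar : ℝ)) := hsi.inner tendsto_const_nhds
    have := (h1.div_const 2).const_mul (Γ i * Γ j)
    rw [hss] at this
    exact this
  -- total limit
  have hT : Filter.Tendsto (fun k => (∑ i ∈ Λ, ∑ l ∈ Λᶜ, Fterm Γ sstar (s k) i l)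
        + (∑ i ∈ Λ, ∑ j ∈ Finset.univ.erase i, Gterm Γ sstar (s k) i j)) Filter.atTop
      (nhds ((∑ i ∈ Λ, ∑ l ∈ Λᶜ, (Γ i * Γ l) * (-(1/2) : ℝ))
        + (∑ i ∈ Λ, ∑ j ∈ Finset.univ.erase i, (Γ i * Γ j) * ((1:ℝ)/2)))) := by
    refine Filter.Tendsto.add ?_ ?_
    · exact tendsto_finset_sum _ fun i hi => tendsto_finset_sum _ fun l hl => htendF i hi l hl
    · exact tendsto_finset_sum _ fun i hi => tendsto_finset_sum _ fun j _ => htendG i hi j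
  have hz : Filter.Tendsto (fun k => (∑ i ∈ Λ, ∑ l ∈ Λᶜ, Fterm Γ sstar (s k) i l)
        + (∑ i ∈ Λ, ∑ j ∈ Finset.univ.erase i, Gterm Γ sstar (s k) i j)) Filter.atTop
      (nhds 0) := by
    have : (fun k => (∑ i ∈ Λ, ∑ l ∈ Λᶜ, Fterm Γ sstar (s k) i l)
        + (∑ i ∈ Λ, ∑ j ∈ Finset.univ.erase i, Gterm Γ sstar (s k) i j)) = fun _ => (0:ℝ) :=
      funext hsum
    rw [this]; exact tendsto_const_nhds
  have hL : (∑ i ∈ Λ, ∑ l ∈ Λᶜ, (Γ i * Γ l) * (-(1/2) : ℝ))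
      + (∑ i ∈ Λ, ∑ j ∈ Finset.univ.erase i, (Γ i * Γ j) * ((1:ℝ)/2)) = 0 :=
    tendsto_nhds_unique hT hz
  -- Step 4: final algebra
  have h2 : ∑ i ∈ Λ, ∑ j ∈ Finset.univ.erase i, (Γ i * Γ j) * ((1:ℝ)/2)
      = (∑ i ∈ Λ, ∑ j ∈ Λ.erase i, (Γ i * Γ j) * ((1:ℝ)/2))
        + (∑ i ∈ Λ, ∑ l ∈ Λᶜ, (Γ i * Γ l) * ((1:ℝ)/2)) := by
    rw [← Finset.sum_add_distrib]
    refine Finset.sum_congr rfl fun i hi => ?_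
    rw [hsplit i hi, Finset.sum_union (hdisj i)]
  have h3 : ∑ i ∈ Λ, ∑ l ∈ Λᶜ, (Γ i * Γ l) * (-(1/2) : ℝ)
      = - ∑ i ∈ Λ, ∑ l ∈ Λᶜ, (Γ i * Γ l) * ((1:ℝ)/2) := by
    rw [← Finset.sum_neg_distrib]
    refine Finset.sum_congr rfl fun i _ => ?_
    rw [← Finset.sum_neg_distrib]
    exact Finset.sum_congr rfl fun l _ => by ring
  rw [h2, h3] at hL
  have hS : ∑ i ∈ Λ, ∑ j ∈ Λ.erase i, (Γ i * Γ j) * ((1:ℝ)/2) = 0 := by linarith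
  have hG : ∑ i ∈ Λ, ∑ j ∈ Λ.erase i, Γ i * Γ j
      = 2 * ∑ i ∈ Λ, ∑ j ∈ Λ.erase i, (Γ i * Γ j) * ((1:ℝ)/2) := by
    rw [Finset.mul_sum]
    refine Finset.sum_congr rfl fun i _ => ?_
    rw [Finset.mul_sum]
    exact Finset.sum_congr rfl fun j _ => by ring
  rw [hG, hS, mul_zero]
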